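/- If F = (V, E) is a k-uniform edge-minimal hypertree on n vertices, then |E| ≤ (n − k + 1)·n(n−1)/2. -/

import Mathlib

variable {V : Type*} [DecidableEq V]

/-- The list of consecutive `k`-windows (as finsets) of a vertex sequence. -/
def windows (k : ℕ) (w : List V) : List (Finset V) :=
  (List.range (w.length + 1 - k)).map fun i => ((w.drop i).take k).toFinset

/-- `w` is the vertex sequence of a chain: `v₁ ≠ v_l`, each window is a `k`-set,
and the `l - k + 1` window edges are pairwise distinct. -/
def IsChainSeq (k : ℕ) (w : List V) : Prop :=
  k ≤ w.length ∧ w.head? ≠ w.getLast? ∧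
  (∀ e ∈ windows k w, e.card = k) ∧ (windows k w).Nodup

/-- `w` is the vertex sequence of a semicycle: `v₁ = v_l`, each window is a `k`-set,
and the `l - k + 1` window edges are pairwise distinct. -/
def IsSemicycleSeq (k : ℕ) (w : List V) : Prop :=
  k ≤ w.length ∧ w.head? = w.getLast? ∧
  (∀ e ∈ windows k w, e.card = k) ∧ (windows k w).Nodup

/-- A hypergraph with edge set `E` contains no semicycle as a subhypergraph. -/
def SemicycleFree (k : ℕ) (E : Finset (Finset V)) : Prop :=
  ¬ ∃ w : List V, IsSemicycleSeq k w ∧ ∀ e ∈ windows k w, e ∈ E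

/-- Every two distinct vertices of `S` lie in a common chain subhypergraph of `E`. -/
def ChainConnOn (k : ℕ) (S : Finset V) (E : Finset (Finset V)) : Prop :=
  ∀ u ∈ S, ∀ v ∈ S, u ≠ v →
    ∃ w : List V, IsChainSeq k w ∧ (∀ e ∈ windows k w, e ∈ E) ∧ u ∈ w ∧ v ∈ w

/-- Chain-connectedness on the whole (finite) vertex type. -/
def ChainConn [Fintype V] (k : ℕ) (E : Finset (Finset V)) : Prop :=
  ChainConnOn k Finset.univ E

/-- A `k`-uniform hypertree: chain-connected and semicycle-free. -/
def IsHypertree [Fintype V] (k : ℕ) (E : Finset (Finset V)) : Prop :=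
  (∀ e ∈ E, e.card = k) ∧ ChainConn k E ∧ SemicycleFree k E

/-- Every chain subhypergraph of `E` has length (number of edges) at most `l`. -/
def ChainsLenLE (k l : ℕ) (E : Finset (Finset V)) : Prop :=
  ∀ w : List V, IsChainSeq k w → (∀ e ∈ windows k w, e ∈ E) →
    w.length + 1 - k ≤ l

/-- An `l`-hypertree: a hypertree all of whose chains have length at most `l`. -/
def IsLHypertree [Fintype V] (k l : ℕ) (E : Finset (Finset V)) : Prop :=
  IsHypertree k E ∧ ChainsLenLE k l E

/-- Edge-minimal: deleting any edge destroys chain-connectedness. -/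
def EdgeMinimal [Fintype V] (k : ℕ) (E : Finset (Finset V)) : Prop :=
  ∀ e ∈ E, ¬ ChainConn k (E.erase e)

/-- Edge-maximal: adding any new `k`-set as an edge creates a semicycle. -/
def EdgeMaximal [Fintype V] (k : ℕ) (E : Finset (Finset V)) : Prop :=
  ∀ s : Finset V, s.card = k → s ∉ E → ¬ SemicycleFree k (insert s E)

/-- `S` is a (tight) star subhypergraph of `E`: a nonempty set of edges of `E`
all containing a common `(k-1)`-set kernel. -/
def IsStarSub (k : ℕ) (E S : Finset (Finset V)) : Prop :=
  S ⊆ E ∧ S.Nonempty ∧ ∃ K : Finset V, K.card = k - 1 ∧ ∀ e ∈ S, K ⊆ e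

/-- `S` is a maximal star subhypergraph of `E`. -/
def IsMaxStar (k : ℕ) (E S : Finset (Finset V)) : Prop :=
  IsStarSub k E S ∧ ∀ T, IsStarSub k E T → S ⊆ T → S = T


section Helpers
variable {V : Type*} [DecidableEq V]

lemma windows_length (k : ℕ) (w : List V) : (windows k w).length = w.length + 1 - k := by
  simp [windows]

lemma windows_getElem (k : ℕ) (w : List V) (t : ℕ) (ht : t < (windows k w).length) :
    (windows k w)[t] = ((w.drop t).take k).toFinset := by
  simp [windows]

lemma mem_windows (k : ℕ) (w : List V) (t : ℕ) (ht : t < w.length + 1 - k) :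
    ((w.drop t).take k).toFinset ∈ windows k w := by
  simp only [windows, List.mem_map, List.mem_range]
  exact ⟨t, ht, rfl⟩

lemma eq_of_close {k : ℕ} {w : List V} (hk : k ≤ w.length)
    (hcard : ∀ e ∈ windows k w, e.card = k) {i j : ℕ} (hij : i ≤ j) (hj : j < w.length)
    (hjk : j < i + k) (heq : w[i]'(lt_of_le_of_lt hij hj) = w[j]'hj) : i = j := by
  obtain ⟨s, hsk, hsi, hjs⟩ : ∃ s, s + k ≤ w.length ∧ s ≤ i ∧ j < s + k :=
    ⟨min i (w.length - k), by omega, by omega, by omega⟩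
  obtain ⟨a, rfl⟩ : ∃ a, i = s + a := ⟨i - s, by omega⟩
  obtain ⟨b, rfl⟩ : ∃ b, j = s + b := ⟨j - s, by omega⟩
  set W := (w.drop s).take k with hW
  have hWlen : W.length = k := by simp [hW]; omega
  have hWcard : W.toFinset.card = k := hcard _ (mem_windows k w s (by omega))
  have hWnd : W.Nodup := by
    rw [← List.dedup_eq_self]
    exact (List.dedup_sublist W).eq_of_length (by rw [← List.card_toFinset, hWcard, hWlen])
  have ha : a < W.length := by omega
  have hb : b < W.length := by omega
  have g1 : W[a] = w[s + a]'(by omega) := by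
    simp only [hW, List.getElem_take, List.getElem_drop]
  have g2 : W[b] = w[s + b]'(by omega) := by
    simp only [hW, List.getElem_take, List.getElem_drop]
  have : a = b := hWnd.getElem_inj_iff.mp (by rw [g1, g2]; exact heq)
  omega

lemma chain_nodup {k : ℕ} {E : Finset (Finset V)} (hsf : SemicycleFree k E)
    {w : List V} (hw : IsChainSeq k w) (hE : ∀ e ∈ windows k w, e ∈ E) : w.Nodup := by
  obtain ⟨hk, -, hcard, hnd⟩ := hw
  by_contra hnod
  rw [List.nodup_iff_injective_get] at hnod
  simp only [Function.Injective] at hnod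
  push_neg at hnod
  obtain ⟨⟨a, ha⟩, ⟨b, hb⟩, hab, hne⟩ := hnod
  have hne' : a ≠ b := fun h => hne (by simpa using h)
  obtain ⟨i, j, hi, hj, hij, heq⟩ :
      ∃ i j, ∃ _ : i < w.length, ∃ _ : j < w.length, i < j ∧ w[i] = w[j] := by
    rcases Nat.lt_or_ge a b with hl | hl
    · exact ⟨a, b, ha, hb, hl, by simpa using hab⟩
    · exact ⟨b, a, hb, ha, by omega, by simpa using hab.symm⟩
  rcases Nat.lt_or_ge j (i + k) with hlt | hge
  · exact absurd (eq_of_close hk hcard (le_of_lt hij) hj hlt heq) (by omega)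
  set v := (w.drop i).take (j - i + 1) with hv
  have hvlen : v.length = j - i + 1 := by simp [hv]; omega
  have hwin : windows k v = ((windows k w).drop i).take (j - i + 2 - k) := by
    apply List.ext_getElem
    · simp only [windows_length, hvlen, List.length_take, List.length_drop]
      omega
    · intro t h1 h2
      simp only [windows_getElem, List.getElem_take, List.getElem_drop]
      have ht : t < j - i + 2 - k := by
        rw [windows_length, hvlen] at h1; omega
      congr 1
      rw [hv, List.drop_take, List.drop_drop, List.take_take]
      congr 1
      omega
  have hsub : (windows k v).Sublist (windows k w) := by
    rw [hwin]
    exact ((((windows k w).drop i).take_sublist _).trans ((windows k w).drop_sublist i))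
  refine hsf ⟨v, ⟨by omega, ?_, fun e he => hcard e (hsub.subset he), hsub.nodup hnd⟩,
    fun e he => hE e (hsub.subset he)⟩
  rw [List.head?_eq_getElem?, List.getLast?_eq_getElem?, hvlen]
  have hidx : j - i + 1 - 1 = j - i := by omega
  rw [hidx]
  have e0 : v[0]'(by omega) = w[i]'hi := by
    simp only [hv, List.getElem_take, List.getElem_drop]
    exact getElem_congr_idx (by omega)
  have e1 : v[j - i]'(by omega) = w[j]'hj := by
    simp only [hv, List.getElem_take, List.getElem_drop]
    exact getElem_congr_idx (by omega)
  rw [List.getElem?_eq_getElem (by omega : 0 < v.length),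
    List.getElem?_eq_getElem (by omega : j - i < v.length), e0, e1, heq]

end Helpers

/-- a `k`-uniform edge-minimal hypertree on `n` vertices has at
most `(n - k + 1)·n(n-1)/2` edges. -/
theorem stmt12 {V : Type*} [Fintype V] [DecidableEq V] (n k : ℕ)
    (hn : Fintype.card V = n)
    (E : Finset (Finset V)) (hH : IsHypertree k E) (hmin : EdgeMinimal k E) :
    E.card ≤ (n - k + 1) * (n * (n - 1) / 2) := by
  classical
  rcases E.eq_empty_or_nonempty with rfl | ⟨e₁, he₁⟩
  · simp
  have hnev : Nonempty (V × V) := by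
    have h := hmin e₁ he₁
    unfold ChainConn ChainConnOn at h
    push_neg at h
    obtain ⟨u, -, v, -⟩ := h
    exact ⟨(u, v)⟩
  have key : ∀ e, e ∈ E → ∃ q : V × V, q.1 ≠ q.2 ∧
      ∀ w : List V, IsChainSeq k w → (∀ x ∈ windows k w, x ∈ E) → q.1 ∈ w → q.2 ∈ w →
        e ∈ windows k w := by
    intro e he
    have h := hmin e he
    unfold ChainConn ChainConnOn at h
    push_neg at h
    obtain ⟨u, -, v, -, huv, hnc⟩ := h
    refine ⟨(u, v), huv, fun w hw hwE hu hv' => ?_⟩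
    by_contra hew
    exact hnc w hw (fun x hx =>
      Finset.mem_erase.mpr ⟨fun hxe => hew (hxe ▸ hx), hwE x hx⟩) hu hv'
  choose! q hq1 hq2 using key
  set g : Finset V → Finset V := fun e => {(q e).1, (q e).2} with hg
  have hmap : ∀ e ∈ E, g e ∈ Finset.univ.powersetCard 2 := by
    intro e he
    rw [Finset.mem_powersetCard]
    exact ⟨Finset.subset_univ _, Finset.card_pair (hq1 e he)⟩
  rw [Finset.card_eq_sum_card_fiberwise hmap]
  have hbound : ∀ s ∈ Finset.univ.powersetCard 2,
      (E.filter fun e => g e = s).card ≤ n - k + 1 := by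
    intro s hs
    rcases (E.filter fun e => g e = s).eq_empty_or_nonempty with hemp | ⟨e0, he0⟩
    · simp [hemp]
    · rw [Finset.mem_filter] at he0
      obtain ⟨he0E, he0s⟩ := he0
      obtain ⟨w, hwchain, hwE, hu, hv'⟩ :=
        hH.2.1 (q e0).1 (Finset.mem_univ _) (q e0).2 (Finset.mem_univ _) (hq1 e0 he0E)
      have hnodup : w.Nodup := chain_nodup hH.2.2 hwchain hwE
      have hmemw : ∀ x ∈ ({(q e0).1, (q e0).2} : Finset V), x ∈ w := by
        intro x hx
        rcases Finset.mem_insert.mp hx with h | h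
        · exact h ▸ hu
        · exact (Finset.mem_singleton.mp h) ▸ hv'
      have hsubset : (E.filter fun e => g e = s) ⊆ (windows k w).toFinset := by
        intro e he
        rw [Finset.mem_filter] at he
        obtain ⟨heE, hes⟩ := he
        have hgg : g e = g e0 := hes.trans he0s.symm
        rw [List.mem_toFinset]
        apply hq2 e heE w hwchain hwE
        · refine hmemw _ ?_
          rw [show ({(q e0).1, (q e0).2} : Finset V) = g e0 from rfl, ← hgg]
          exact Finset.mem_insert_self _ _
        · refine hmemw _ ?_
          rw [show ({(q e0).1, (q e0).2} : Finset V) = g e0 from rfl, ← hgg]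
          exact Finset.mem_insert_of_mem (Finset.mem_singleton_self _)
      calc (E.filter fun e => g e = s).card ≤ (windows k w).toFinset.card :=
            Finset.card_le_card hsubset
        _ ≤ (windows k w).length := (windows k w).toFinset_card_le
        _ = w.length + 1 - k := windows_length k w
        _ ≤ n - k + 1 := by
            have := hnodup.length_le_card
            rw [hn] at this
            omega
  calc ∑ s ∈ Finset.univ.powersetCard 2, (E.filter fun e => g e = s).card
      ≤ ∑ _s ∈ Finset.univ.powersetCard 2, (n - k + 1) := Finset.sum_le_sum hbound
    _ = (Finset.univ.powersetCard 2).card * (n - k + 1) := by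
        rw [Finset.sum_const, smul_eq_mul]
    _ = n.choose 2 * (n - k + 1) := by
        rw [Finset.card_powersetCard, Finset.card_univ, hn]
    _ = (n - k + 1) * (n * (n - 1) / 2) := by
        rw [Nat.choose_two_right, Nat.mul_comm]
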